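/- (Accuracy bound for the stranger approximation.) Let M be a column-stochastic n×n real matrix, let 0 < c < 1, and let q, b ∈ ℝ^n be stochastic vectors. Let T be a natural number. Define the exact stranger part r_stranger = ∑_{i=T}^{∞} c(1-c)^i M^i q and the approximate stranger part r̃_stranger = ∑_{i=T}^{∞} c(1-c)^i M^i b (both series converge). Then ‖r_stranger - r̃_stranger‖₁ ≤ 2(1-c)^T. -/

import Mathlib

lemma stoch_pow {n : ℕ} (M : Matrix (Fin n) (Fin n) ℝ)
    (hMnn : ∀ i j, 0 ≤ M i j) (hMcol : ∀ j, ∑ i, M i j = 1)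
    (x : Fin n → ℝ) (hxnn : ∀ i, 0 ≤ x i) (hx1 : ∑ i, x i = 1) (k : ℕ) :
    (∀ j, 0 ≤ (M ^ k).mulVec x j) ∧ ∑ j, (M ^ k).mulVec x j = 1 := by
  induction k with
  | zero => simpa [Matrix.one_mulVec] using ⟨hxnn, hx1⟩
  | succ k ih =>
    have h : (M ^ (k+1)).mulVec x = M.mulVec ((M ^ k).mulVec x) := by
      rw [pow_succ', Matrix.mulVec_mulVec]
    rw [h]
    constructor
    · intro j
      simp only [Matrix.mulVec, dotProduct]
      exact Finset.sum_nonneg fun i _ => mul_nonneg (hMnn j i) (ih.1 i)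
    · rw [show ∑ j, M.mulVec ((M ^ k).mulVec x) j
          = ∑ i, (∑ j, M j i) * (M ^ k).mulVec x i by
        simp only [Matrix.mulVec, dotProduct, Finset.sum_mul]
        rw [Finset.sum_comm]]
      simp only [hMcol, one_mul, ih.2]

theorem stranger_approx_bound {n : ℕ} (M : Matrix (Fin n) (Fin n) ℝ)
    (hMnn : ∀ i j, 0 ≤ M i j) (hMcol : ∀ j, ∑ i, M i j = 1)
    (c : ℝ) (hc0 : 0 < c) (hc1 : c < 1)
    (q : Fin n → ℝ) (hqnn : ∀ i, 0 ≤ q i) (hq1 : ∑ i, q i = 1)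
    (b : Fin n → ℝ) (hbnn : ∀ i, 0 ≤ b i) (hb1 : ∑ i, b i = 1)
    (T : ℕ) :
    Summable (fun i : ℕ => (c * (1 - c) ^ (T + i)) • (M ^ (T + i)).mulVec q) ∧
    Summable (fun i : ℕ => (c * (1 - c) ^ (T + i)) • (M ^ (T + i)).mulVec b) ∧
    ∑ j, |((∑' i : ℕ, (c * (1 - c) ^ (T + i)) • (M ^ (T + i)).mulVec q)
            - (∑' i : ℕ, (c * (1 - c) ^ (T + i)) • (M ^ (T + i)).mulVec b)) j|
      ≤ 2 * (1 - c) ^ T := by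
  have h1c : 0 ≤ 1 - c := by linarith
  have h1c1 : |1 - c| < 1 := by rw [abs_of_nonneg h1c]; linarith
  have hgeo : Summable (fun i : ℕ => (1 - c) ^ i) := summable_geometric_of_lt_one h1c (by linarith)
  have hcoef : Summable (fun i : ℕ => c * (1 - c) ^ (T + i)) := by
    simpa [pow_add, mul_assoc] using (hgeo.mul_left (c * (1 - c) ^ T))
  -- componentwise summability
  have key : ∀ (x : Fin n → ℝ), (∀ i, 0 ≤ x i) → (∑ i, x i = 1) →
      (∀ j, Summable fun i : ℕ => ((c * (1 - c) ^ (T + i)) • (M ^ (T + i)).mulVec x) j) := by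
    intro x hxnn hx1 j
    apply Summable.of_nonneg_of_le ?_ ?_ hcoef
    · intro i
      exact mul_nonneg (mul_nonneg hc0.le (pow_nonneg h1c _))
        ((stoch_pow M hMnn hMcol x hxnn hx1 (T + i)).1 j)
    · intro i
      have hle : (M ^ (T + i)).mulVec x j ≤ 1 := by
        have := (stoch_pow M hMnn hMcol x hxnn hx1 (T + i))
        calc (M ^ (T + i)).mulVec x j ≤ ∑ j', (M ^ (T + i)).mulVec x j' :=
              Finset.single_le_sum (fun j' _ => this.1 j') (Finset.mem_univ j)
          _ = 1 := this.2
      have hc' : 0 ≤ c * (1 - c) ^ (T + i) := mul_nonneg hc0.le (pow_nonneg h1c _)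
      simpa [smul_eq_mul] using mul_le_of_le_one_right hc' hle
  have hSq : Summable (fun i : ℕ => (c * (1 - c) ^ (T + i)) • (M ^ (T + i)).mulVec q) :=
    Pi.summable.2 (key q hqnn hq1)
  have hSb : Summable (fun i : ℕ => (c * (1 - c) ^ (T + i)) • (M ^ (T + i)).mulVec b) :=
    Pi.summable.2 (key b hbnn hb1)
  refine ⟨hSq, hSb, ?_⟩
  have hq' := key q hqnn hq1
  have hb' := key b hbnn hb1
  have hdiff : ∀ j, ((∑' i : ℕ, (c * (1 - c) ^ (T + i)) • (M ^ (T + i)).mulVec q)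
            - (∑' i : ℕ, (c * (1 - c) ^ (T + i)) • (M ^ (T + i)).mulVec b)) j
      = ∑' i : ℕ, (((c * (1 - c) ^ (T + i)) • (M ^ (T + i)).mulVec q) j
            - ((c * (1 - c) ^ (T + i)) • (M ^ (T + i)).mulVec b) j) := by
    intro j
    rw [Pi.sub_apply, tsum_apply hSq, tsum_apply hSb, Summable.tsum_sub (hq' j) (hb' j)]
  calc ∑ j, |((∑' i : ℕ, (c * (1 - c) ^ (T + i)) • (M ^ (T + i)).mulVec q)
            - (∑' i : ℕ, (c * (1 - c) ^ (T + i)) • (M ^ (T + i)).mulVec b)) j|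
      ≤ ∑ j, ∑' i : ℕ, |(((c * (1 - c) ^ (T + i)) • (M ^ (T + i)).mulVec q) j
            - ((c * (1 - c) ^ (T + i)) • (M ^ (T + i)).mulVec b) j)| := by
        apply Finset.sum_le_sum
        intro j _
        rw [hdiff j]
        simpa [Real.norm_eq_abs] using norm_tsum_le_tsum_norm (f := fun i => ((c * (1 - c) ^ (T + i)) • (M ^ (T + i)).mulVec q) j - ((c * (1 - c) ^ (T + i)) • (M ^ (T + i)).mulVec b) j) (by simpa [Real.norm_eq_abs] using ((hq' j).sub (hb' j)).abs)
    _ = ∑' i : ℕ, ∑ j, |(((c * (1 - c) ^ (T + i)) • (M ^ (T + i)).mulVec q) j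
            - ((c * (1 - c) ^ (T + i)) • (M ^ (T + i)).mulVec b) j)| := by
        rw [Summable.tsum_finsetSum]
        intro j _
        exact ((hq' j).sub (hb' j)).abs
    _ ≤ ∑' i : ℕ, 2 * (c * (1 - c) ^ (T + i)) := by
        apply Summable.tsum_le_tsum ?_ ?_ (hcoef.mul_left 2)
        · intro i
          have hc' : 0 ≤ c * (1 - c) ^ (T + i) := mul_nonneg hc0.le (pow_nonneg h1c _)
          have hsum : ∑ j, (|(M ^ (T + i)).mulVec q j| + |(M ^ (T + i)).mulVec b j|) = 2 := by
            have hQ := stoch_pow M hMnn hMcol q hqnn hq1 (T + i)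
            have hB := stoch_pow M hMnn hMcol b hbnn hb1 (T + i)
            rw [Finset.sum_add_distrib]
            rw [Finset.sum_congr rfl fun j _ => abs_of_nonneg (hQ.1 j),
              Finset.sum_congr rfl fun j _ => abs_of_nonneg (hB.1 j), hQ.2, hB.2]
            norm_num
          calc ∑ j, |(((c * (1 - c) ^ (T + i)) • (M ^ (T + i)).mulVec q) j
                - ((c * (1 - c) ^ (T + i)) • (M ^ (T + i)).mulVec b) j)|
              = (c * (1 - c) ^ (T + i)) * ∑ j, |(M ^ (T + i)).mulVec q j - (M ^ (T + i)).mulVec b j| := by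
                rw [Finset.mul_sum]
                apply Finset.sum_congr rfl
                intro j _
                rw [Pi.smul_apply, Pi.smul_apply, smul_eq_mul, smul_eq_mul, ← mul_sub,
                  abs_mul, abs_of_nonneg hc']
            _ ≤ (c * (1 - c) ^ (T + i)) * ∑ j, (|(M ^ (T + i)).mulVec q j| + |(M ^ (T + i)).mulVec b j|) := by
                apply mul_le_mul_of_nonneg_left ?_ hc'
                exact Finset.sum_le_sum fun j _ => abs_sub _ _
            _ = 2 * (c * (1 - c) ^ (T + i)) := by rw [hsum]; ring
        · apply Summable.of_nonneg_of_le (fun i => Finset.sum_nonneg fun j _ => abs_nonneg _)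
            ?_ (hcoef.mul_left 2)
          intro i
          -- reuse the bound: sum of abs ≤ 2 * coef
          have hc' : 0 ≤ c * (1 - c) ^ (T + i) := mul_nonneg hc0.le (pow_nonneg h1c _)
          have hQ := stoch_pow M hMnn hMcol q hqnn hq1 (T + i)
          have hB := stoch_pow M hMnn hMcol b hbnn hb1 (T + i)
          calc ∑ j, |(((c * (1 - c) ^ (T + i)) • (M ^ (T + i)).mulVec q) j
                - ((c * (1 - c) ^ (T + i)) • (M ^ (T + i)).mulVec b) j)|
              ≤ ∑ j, (c * (1 - c) ^ (T + i)) * (|(M ^ (T + i)).mulVec q j| + |(M ^ (T + i)).mulVec b j|) := by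
                apply Finset.sum_le_sum
                intro j _
                rw [Pi.smul_apply, Pi.smul_apply, smul_eq_mul, smul_eq_mul, ← mul_sub,
                  abs_mul, abs_of_nonneg hc']
                exact mul_le_mul_of_nonneg_left (abs_sub _ _) hc'
            _ = 2 * (c * (1 - c) ^ (T + i)) := by
                rw [← Finset.mul_sum, Finset.sum_add_distrib,
                  Finset.sum_congr rfl fun j _ => abs_of_nonneg (hQ.1 j),
                  Finset.sum_congr rfl fun j _ => abs_of_nonneg (hB.1 j), hQ.2, hB.2]
                ring
    _ = 2 * (1 - c) ^ T := by
        have : ∑' i : ℕ, 2 * (c * (1 - c) ^ (T + i))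
            = (2 * c * (1 - c) ^ T) * ∑' i : ℕ, (1 - c) ^ i := by
          rw [← tsum_mul_left]
          congr 1; ext i; ring
        rw [this, tsum_geometric_of_lt_one h1c (by linarith),
          show (1 - (1 - c))⁻¹ = c⁻¹ by norm_num]
        field_simp
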